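/- For positive integers m, n ≥ 2, the cycle hull number of the grid graph P_m □ P_n equals m + n − 1. -/

import Mathlib

open SimpleGraph

variable {V α β : Type*}

/-- A set `S` is cycle convex in `G` if no vertex outside `S` lies on a cycle in the
subgraph induced by `S ∪ {w}`. -/
def CycleConvex (G : SimpleGraph V) (S : Set V) : Prop :=
  ∀ w : V, w ∉ S →
    ∀ c : (G.induce (insert w S)).Walk ⟨w, Set.mem_insert w S⟩ ⟨w, Set.mem_insert w S⟩,
      ¬ c.IsCycle

/-- The cycle convex hull of `S`: the smallest cycle convex set containing `S`. -/
def cycleHull (G : SimpleGraph V) (S : Set V) : Set V :=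
  ⋂₀ {T : Set V | S ⊆ T ∧ CycleConvex G T}

/-- The cycle hull number: minimum size of a set whose cycle convex hull is everything. -/
noncomputable def cycleHullNumber (G : SimpleGraph V) : ℕ :=
  sInf {n : ℕ | ∃ S : Set V, S.ncard = n ∧ cycleHull G S = Set.univ}

/-- The cycle convexity number: maximum size of a proper cycle convex set. -/
noncomputable def cycleConvexityNumber (G : SimpleGraph V) : ℕ :=
  sSup {n : ℕ | ∃ S : Set V, S.ncard = n ∧ CycleConvex G S ∧ S ≠ Set.univ}

/-- The independence number of a graph. -/
noncomputable def indepNumber (G : SimpleGraph V) : ℕ :=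
  sSup {n : ℕ | ∃ S : Set V, S.ncard = n ∧ S.Pairwise fun a b => ¬ G.Adj a b}

/-- The strong product of two simple graphs. -/
def strongProd (G : SimpleGraph α) (H : SimpleGraph β) : SimpleGraph (α × β) where
  Adj x y := (G.Adj x.1 y.1 ∧ x.2 = y.2) ∨ (x.1 = y.1 ∧ H.Adj x.2 y.2) ∨
    (G.Adj x.1 y.1 ∧ H.Adj x.2 y.2)
  symm := ⟨fun x y h => by
    rcases h with ⟨h1, h2⟩ | ⟨h1, h2⟩ | ⟨h1, h2⟩
    · exact Or.inl ⟨h1.symm, h2.symm⟩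
    · exact Or.inr (Or.inl ⟨h1.symm, h2.symm⟩)
    · exact Or.inr (Or.inr ⟨h1.symm, h2.symm⟩)⟩
  loopless := ⟨fun x h => by
    rcases h with ⟨h1, _⟩ | ⟨_, h2⟩ | ⟨h1, _⟩
    · exact G.loopless.irrefl _ h1
    · exact H.loopless.irrefl _ h2
    · exact G.loopless.irrefl _ h1⟩

/-- The lexicographic product of two simple graphs. -/
def lexProd (G : SimpleGraph α) (H : SimpleGraph β) : SimpleGraph (α × β) where
  Adj x y := G.Adj x.1 y.1 ∨ (x.1 = y.1 ∧ H.Adj x.2 y.2)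
  symm := ⟨fun x y h => by
    rcases h with h1 | ⟨h1, h2⟩
    · exact Or.inl h1.symm
    · exact Or.inr ⟨h1.symm, h2.symm⟩⟩
  loopless := ⟨fun x h => by
    rcases h with h1 | ⟨_, h2⟩
    · exact G.loopless.irrefl _ h1
    · exact H.loopless.irrefl _ h2⟩


namespace CCGrid

abbrev Pt := ℕ × ℕ

def nadj (p q : Pt) : Prop :=
  (p.1 = q.1 ∧ (p.2 + 1 = q.2 ∨ q.2 + 1 = p.2)) ∨
  (p.2 = q.2 ∧ (p.1 + 1 = q.1 ∨ q.1 + 1 = p.1))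

lemma nadj.symm {p q : Pt} (h : nadj p q) : nadj q p := by
  unfold nadj at *; omega

def reach (T : Finset Pt) : Pt → Pt → Prop :=
  Relation.ReflTransGen (fun a b => a ∈ T ∧ b ∈ T ∧ nadj a b)

lemma reach.symm {T : Finset Pt} {p q : Pt} (h : reach T p q) : reach T q p :=
  Relation.ReflTransGen.mono (fun _ _ hab => ⟨hab.2.1, hab.1, hab.2.2.symm⟩) _ _
    (Relation.ReflTransGen.swap q p h)

lemma reach.trans {T : Finset Pt} {p q r : Pt} (h : reach T p q) (h' : reach T q r) :
    reach T p r := Relation.ReflTransGen.trans h h'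

lemma reach.mono {T T' : Finset Pt} (hTT : T ⊆ T') {p q : Pt} (h : reach T p q) :
    reach T' p q :=
  Relation.ReflTransGen.mono (fun _ _ hab => ⟨hTT hab.1, hTT hab.2.1, hab.2.2⟩) _ _ h

lemma reach.mem_right {T : Finset Pt} {p q : Pt} (h : reach T p q) : q = p ∨ q ∈ T := by
  induction h with
  | refl => exact Or.inl rfl
  | tail _ h2 _ => exact Or.inr h2.2.1

attribute [local instance] Classical.propDecidable

noncomputable def comp (T : Finset Pt) (p : Pt) : Finset Pt :=
  T.filter (reach T p)

lemma mem_comp {T : Finset Pt} {p q : Pt} : q ∈ comp T p ↔ q ∈ T ∧ reach T p q := by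
  unfold comp; exact Finset.mem_filter

lemma comp_subset {T : Finset Pt} {p : Pt} : comp T p ⊆ T := Finset.filter_subset _ _

lemma self_mem_comp {T : Finset Pt} {p : Pt} (hp : p ∈ T) : p ∈ comp T p :=
  mem_comp.2 ⟨hp, Relation.ReflTransGen.refl⟩

lemma comp_eq_of_reach {T : Finset Pt} {p q : Pt} (h : reach T p q) :
    comp T p = comp T q := by
  ext x
  simp only [mem_comp]
  exact ⟨fun hx => ⟨hx.1, h.symm.trans hx.2⟩, fun hx => ⟨hx.1, h.trans hx.2⟩⟩

/-! ### spans -/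

def span (s : Finset ℕ) : ℕ := WithBot.unbotD 0 s.max + 1 - WithTop.untopD 0 s.min

lemma span_eq {s : Finset ℕ} (hs : s.Nonempty) : span s = s.max' hs + 1 - s.min' hs := by
  unfold span
  rw [← Finset.coe_max' hs, ← Finset.coe_min' hs]
  rfl

def phi1 (C : Finset Pt) : ℕ :=
  span (C.image Prod.fst) + span (C.image Prod.snd) - 1

lemma span_singleton (a : ℕ) : span {a} = 1 := by
  have h : ({a} : Finset ℕ).Nonempty := ⟨a, by simp⟩
  rw [span_eq h]
  simp

lemma phi1_singleton (p : Pt) : phi1 {p} = 1 := by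
  unfold phi1
  rw [Finset.image_singleton, Finset.image_singleton, span_singleton, span_singleton]

noncomputable def phi (T : Finset Pt) : ℕ :=
  ∑ C ∈ T.image (comp T), phi1 C

/-- The core merge bound: if `w ∈ B` and `C` contains a neighbor of `w`,
then merging loses nothing beyond additivity. -/
lemma phi1_union_le {B C : Finset Pt} {w u : Pt} (hwB : w ∈ B) (huC : u ∈ C)
    (hadj : nadj w u) : phi1 (B ∪ C) ≤ phi1 B + phi1 C := by
  classical
  have hrB : (B.image Prod.fst).Nonempty := ⟨w.1, Finset.mem_image_of_mem _ hwB⟩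
  have hcB : (B.image Prod.snd).Nonempty := ⟨w.2, Finset.mem_image_of_mem _ hwB⟩
  have hrC : (C.image Prod.fst).Nonempty := ⟨u.1, Finset.mem_image_of_mem _ huC⟩
  have hcC : (C.image Prod.snd).Nonempty := ⟨u.2, Finset.mem_image_of_mem _ huC⟩
  have hrU : ((B ∪ C).image Prod.fst).Nonempty := ⟨w.1, Finset.mem_image_of_mem _ (Finset.mem_union_left _ hwB)⟩
  have hcU : ((B ∪ C).image Prod.snd).Nonempty := ⟨w.2, Finset.mem_image_of_mem _ (Finset.mem_union_left _ hwB)⟩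
  have h1 : (B ∪ C).image Prod.fst = B.image Prod.fst ∪ C.image Prod.fst :=
    Finset.image_union _ _
  have h2 : (B ∪ C).image Prod.snd = B.image Prod.snd ∪ C.image Prod.snd :=
    Finset.image_union _ _
  unfold phi1
  rw [span_eq hrU, span_eq hcU, span_eq hrB, span_eq hcB, span_eq hrC, span_eq hcC]
  have e1 : ((B ∪ C).image Prod.fst).max' hrU =
      max ((B.image Prod.fst).max' hrB) ((C.image Prod.fst).max' hrC) := by
    simp_rw [h1]; exact Finset.max'_union hrB hrC
  have e2 : ((B ∪ C).image Prod.fst).min' hrU =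
      min ((B.image Prod.fst).min' hrB) ((C.image Prod.fst).min' hrC) := by
    simp_rw [h1]; exact Finset.min'_union hrB hrC
  have e3 : ((B ∪ C).image Prod.snd).max' hcU =
      max ((B.image Prod.snd).max' hcB) ((C.image Prod.snd).max' hcC) := by
    simp_rw [h2]; exact Finset.max'_union hcB hcC
  have e4 : ((B ∪ C).image Prod.snd).min' hcU =
      min ((B.image Prod.snd).min' hcB) ((C.image Prod.snd).min' hcC) := by
    simp_rw [h2]; exact Finset.min'_union hcB hcC
  rw [e1, e2, e3, e4]
  have b1 : (B.image Prod.fst).min' hrB ≤ w.1 := Finset.min'_le _ _ (Finset.mem_image_of_mem _ hwB)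
  have b2 : w.1 ≤ (B.image Prod.fst).max' hrB := Finset.le_max' _ _ (Finset.mem_image_of_mem _ hwB)
  have b3 : (B.image Prod.snd).min' hcB ≤ w.2 := Finset.min'_le _ _ (Finset.mem_image_of_mem _ hwB)
  have b4 : w.2 ≤ (B.image Prod.snd).max' hcB := Finset.le_max' _ _ (Finset.mem_image_of_mem _ hwB)
  have b5 : (C.image Prod.fst).min' hrC ≤ u.1 := Finset.min'_le _ _ (Finset.mem_image_of_mem _ huC)
  have b6 : u.1 ≤ (C.image Prod.fst).max' hrC := Finset.le_max' _ _ (Finset.mem_image_of_mem _ huC)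
  have b7 : (C.image Prod.snd).min' hcC ≤ u.2 := Finset.min'_le _ _ (Finset.mem_image_of_mem _ huC)
  have b8 : u.2 ≤ (C.image Prod.snd).max' hcC := Finset.le_max' _ _ (Finset.mem_image_of_mem _ huC)
  unfold nadj at hadj
  omega

/-! ### Components under insertion -/

section Insertion

variable {T : Finset Pt} {w : Pt}

lemma reach_insert_cases (hw : w ∉ T) {p q : Pt} (hp : p ∈ T)
    (h : reach (insert w T) p q) : reach (insert w T) p w ∨ reach T p q := by
  induction h with
  | refl => exact Or.inr Relation.ReflTransGen.refl
  | @tail x q h1 h2 ih =>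
    rcases ih with ih | ih
    · exact Or.inl ih
    · by_cases hq : q = w
      · subst hq
        exact Or.inl ((ih.mono (Finset.subset_insert _ _)).tail h2)
      · have hx : x ∈ T := by
          rcases ih.mem_right with rfl | hx
          · exact hp
          · exact hx
        have hq' : q ∈ T := by
          rcases Finset.mem_insert.1 h2.2.1 with rfl | h; · exact absurd rfl hq
          · assumption
        exact Or.inr (ih.tail ⟨hx, hq', h2.2.2⟩)

lemma reach_from_w (hw : w ∉ T) {q : Pt} (h : reach (insert w T) w q) (hq : q ≠ w) :
    ∃ u, u ∈ T ∧ nadj w u ∧ reach T u q := by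
  induction h with
  | refl => exact absurd rfl hq
  | @tail x q h1 h2 ih =>
    by_cases hx : x = w
    · subst hx
      have hqT : q ∈ T := by
        rcases Finset.mem_insert.1 h2.2.1 with rfl | h; · exact absurd rfl hq
        · assumption
      exact ⟨q, hqT, h2.2.2, Relation.ReflTransGen.refl⟩
    · obtain ⟨u, hu1, hu2, hu3⟩ := ih hx
      have hxT : x ∈ T := by
        rcases Finset.mem_insert.1 h2.1 with rfl | h; · exact absurd rfl hx
        · assumption
      have hqT : q ∈ T := by
        rcases Finset.mem_insert.1 h2.2.1 with rfl | h; · exact absurd rfl hq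
        · assumption
      exact ⟨u, hu1, hu2, hu3.tail ⟨hxT, hqT, h2.2.2⟩⟩

lemma comp_insert_of_not_reach (hw : w ∉ T) {p : Pt} (hp : p ∈ T)
    (hnr : ¬ reach (insert w T) w p) : comp (insert w T) p = comp T p := by
  ext q
  simp only [mem_comp, Finset.mem_insert]
  constructor
  · rintro ⟨hq1, hq2⟩
    rcases reach_insert_cases hw hp hq2 with h | h
    · exact absurd h.symm hnr
    · rcases hq1 with rfl | hq1
      · exfalso
        rcases h.mem_right with heq | hh
        · exact hw (heq ▸ hp)
        · exact hw hh
      · exact ⟨hq1, h⟩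
  · rintro ⟨hq1, hq2⟩
    exact ⟨Or.inr hq1, hq2.mono (Finset.subset_insert _ _)⟩

end Insertion

/-! ### The two main potential inequalities -/

section Main

variable {T : Finset Pt} {w : Pt}

/-- The blob lemma. -/
lemma phi1_blob (w : Pt) : ∀ (M : Finset (Finset Pt)) (B0 : Finset Pt), w ∈ B0 →
    (∀ C ∈ M, ∃ u ∈ C, nadj w u) →
    phi1 (B0 ∪ M.sup id) ≤ phi1 B0 + ∑ C ∈ M, phi1 C := by
  classical
  intro M
  induction M using Finset.induction_on with
  | empty => intro B0 _ _; simp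
  | @insert C M hCM ih =>
    intro B0 hw hM
    obtain ⟨u, huC, hadj⟩ := hM C (Finset.mem_insert_self _ _)
    have h1 : B0 ∪ (insert C M).sup id = (B0 ∪ M.sup id) ∪ C := by
      rw [Finset.sup_insert]
      simp only [id_eq, Finset.sup_eq_union]
      rw [Finset.union_comm C (M.sup id), ← Finset.union_assoc]
    rw [h1, Finset.sum_insert hCM]
    calc phi1 ((B0 ∪ M.sup id) ∪ C) ≤ phi1 (B0 ∪ M.sup id) + phi1 C :=
          phi1_union_le (Finset.mem_union_left _ hw) huC hadj
      _ ≤ (phi1 B0 + ∑ C ∈ M, phi1 C) + phi1 C := by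
          have := ih B0 hw (fun C hC => hM C (Finset.mem_insert_of_mem hC))
          omega
      _ = phi1 B0 + (phi1 C + ∑ C ∈ M, phi1 C) := by ring

end Main
section Decomp

variable {T : Finset Pt} {w : Pt}

lemma phi_insert_decomp (hw : w ∉ T) : ∃ AI M : Finset (Finset Pt),
    (∀ C ∈ M, ∃ u ∈ C, nadj w u) ∧
    phi T = (∑ C ∈ AI, phi1 C) + ∑ C ∈ M, phi1 C ∧
    phi (insert w T) = (∑ C ∈ AI, phi1 C) + phi1 (insert w (M.sup id)) ∧
    (∀ u ∈ T, nadj w u → comp T u ∈ M) := by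
  classical
  set T' := insert w T with hT'
  have hwT' : w ∈ T' := Finset.mem_insert_self _ _
  set A : Finset Pt := T.filter (fun p => ¬ reach T' w p) with hA
  set B : Finset Pt := T.filter (fun p => reach T' w p) with hB
  set M : Finset (Finset Pt) := B.image (comp T) with hM
  refine ⟨A.image (comp T), M, ?_, ?_, ?_, ?_⟩
  · -- f7 : every merged component contains a neighbour of w
    intro C hC
    obtain ⟨b, hb, rfl⟩ := Finset.mem_image.1 hC
    have hbT : b ∈ T := (Finset.mem_filter.1 hb).1
    have hbr : reach T' w b := (Finset.mem_filter.1 hb).2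
    have hbw : b ≠ w := fun h => hw (h ▸ hbT)
    obtain ⟨u, hu1, hu2, hu3⟩ := reach_from_w hw hbr hbw
    exact ⟨u, mem_comp.2 ⟨hu1, hu3.symm⟩, hu2⟩
  · -- phi T decomposition
    have hunion : T.image (comp T) = A.image (comp T) ∪ M := by
      rw [hM, ← Finset.image_union]
      congr 1
      ext x
      simp only [Finset.mem_union, hA, hB, Finset.mem_filter]
      tauto
    have hdisj : Disjoint (A.image (comp T)) M := by
      rw [Finset.disjoint_left]
      rintro D hDA hDM
      obtain ⟨a, ha, rfl⟩ := Finset.mem_image.1 hDA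
      obtain ⟨b, hb, hEq⟩ := Finset.mem_image.1 hDM
      have haT : a ∈ T := (Finset.mem_filter.1 ha).1
      have hbT : b ∈ T := (Finset.mem_filter.1 hb).1
      have hbr : reach T' w b := (Finset.mem_filter.1 hb).2
      have hba : reach T b a := by
        have : b ∈ comp T a := hEq ▸ self_mem_comp hbT
        exact (mem_comp.1 this).2.symm
      have : reach T' w a := hbr.trans (hba.mono (Finset.subset_insert _ _))
      exact (Finset.mem_filter.1 ha).2 this
    rw [phi, hunion, Finset.sum_union hdisj]
  · -- phi (insert w T) decomposition
    have hcompw : comp T' w = insert w (M.sup id) := by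
      have hBsup : B = M.sup id := by
        ext q
        rw [Finset.mem_sup]
        constructor
        · intro hq
          exact ⟨comp T q, Finset.mem_image_of_mem _ hq,
            self_mem_comp (Finset.mem_filter.1 hq).1⟩
        · rintro ⟨C, hC, hqC⟩
          obtain ⟨b, hb, rfl⟩ := Finset.mem_image.1 hC
          obtain ⟨hqT, hqr⟩ := mem_comp.1 hqC
          have hbr : reach T' w b := (Finset.mem_filter.1 hb).2
          exact Finset.mem_filter.2 ⟨hqT, hbr.trans (hqr.mono (Finset.subset_insert _ _))⟩
      rw [← hBsup]
      ext q
      simp only [mem_comp, Finset.mem_insert, hB, Finset.mem_filter, hT']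
      constructor
      · rintro ⟨rfl | hq, hr⟩
        · exact Or.inl rfl
        · exact Or.inr ⟨hq, hr⟩
      · rintro (rfl | ⟨hq, hr⟩)
        · exact ⟨Or.inl rfl, Relation.ReflTransGen.refl⟩
        · exact ⟨Or.inr hq, hr⟩
    have himg : T'.image (comp T') = insert (comp T' w) (A.image (comp T)) := by
      ext D
      simp only [Finset.mem_image, Finset.mem_insert]
      constructor
      · rintro ⟨p, hp, rfl⟩
        rcases Finset.mem_insert.1 hp with rfl | hpT
        · exact Or.inl rfl
        · by_cases hr : reach T' w p
          · exact Or.inl (comp_eq_of_reach hr).symm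
          · exact Or.inr ⟨p, Finset.mem_filter.2 ⟨hpT, hr⟩,
              (comp_insert_of_not_reach hw hpT hr).symm⟩
      · rintro (rfl | ⟨p, hp, rfl⟩)
        · exact ⟨w, hwT', rfl⟩
        · have hpT : p ∈ T := (Finset.mem_filter.1 hp).1
          have hnr : ¬ reach T' w p := (Finset.mem_filter.1 hp).2
          exact ⟨p, Finset.mem_insert_of_mem hpT,
            comp_insert_of_not_reach hw hpT hnr⟩
    have hnotmem : comp T' w ∉ A.image (comp T) := by
      intro hmem
      obtain ⟨p, hp, hEq⟩ := Finset.mem_image.1 hmem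
      have : w ∈ comp T p := hEq ▸ self_mem_comp hwT'
      exact hw (comp_subset this)
    rw [phi, himg, Finset.sum_insert hnotmem, hcompw, add_comm]
  · -- neighbours' components are in M
    intro u hu hadj
    apply Finset.mem_image_of_mem
    exact Finset.mem_filter.2 ⟨hu,
      Relation.ReflTransGen.single ⟨hwT', Finset.mem_insert_of_mem hu, hadj⟩⟩

lemma phi_insert_le_succ (hw : w ∉ T) : phi (insert w T) ≤ phi T + 1 := by
  classical
  obtain ⟨AI, M, hM, hphiT, hphiT', _⟩ := phi_insert_decomp hw
  have hblob : phi1 (insert w (M.sup id)) ≤ phi1 {w} + ∑ C ∈ M, phi1 C := by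
    rw [Finset.insert_eq]
    exact phi1_blob w M {w} (Finset.mem_singleton_self w) hM
  rw [phi1_singleton] at hblob
  omega

lemma phi1_insert_box {C0 : Finset Pt} {w u v : Pt} (hu : u ∈ C0) (hv : v ∈ C0)
    (huv : u ≠ v) (hau : nadj w u) (hav : nadj w v) :
    phi1 (insert w C0) ≤ phi1 C0 := by
  classical
  have hne : u.1 ≠ v.1 ∨ u.2 ≠ v.2 := by
    by_contra h
    push_neg at h
    exact huv (Prod.ext h.1 h.2)
  have hrC : (C0.image Prod.fst).Nonempty := ⟨u.1, Finset.mem_image_of_mem _ hu⟩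
  have hcC : (C0.image Prod.snd).Nonempty := ⟨u.2, Finset.mem_image_of_mem _ hu⟩
  have h1 : (insert w C0).image Prod.fst = insert w.1 (C0.image Prod.fst) :=
    Finset.image_insert _ _ _
  have h2 : (insert w C0).image Prod.snd = insert w.2 (C0.image Prod.snd) :=
    Finset.image_insert _ _ _
  have hrI : ((insert w C0).image Prod.fst).Nonempty := by rw [h1]; exact Finset.insert_nonempty _ _
  have hcI : ((insert w C0).image Prod.snd).Nonempty := by rw [h2]; exact Finset.insert_nonempty _ _
  unfold phi1
  rw [span_eq hrI, span_eq hcI, span_eq hrC, span_eq hcC]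
  have e1 : ((insert w C0).image Prod.fst).max' hrI
      = max ((C0.image Prod.fst).max' hrC) w.1 := by
    simp_rw [h1]; exact (Finset.max'_insert _ _ _).trans (max_comm _ _)
  have e2 : ((insert w C0).image Prod.fst).min' hrI
      = min ((C0.image Prod.fst).min' hrC) w.1 := by
    simp_rw [h1]; exact (Finset.min'_insert _ _ _).trans (min_comm _ _)
  have e3 : ((insert w C0).image Prod.snd).max' hcI
      = max ((C0.image Prod.snd).max' hcC) w.2 := by
    simp_rw [h2]; exact (Finset.max'_insert _ _ _).trans (max_comm _ _)
  have e4 : ((insert w C0).image Prod.snd).min' hcI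
      = min ((C0.image Prod.snd).min' hcC) w.2 := by
    simp_rw [h2]; exact (Finset.min'_insert _ _ _).trans (min_comm _ _)
  rw [e1, e2, e3, e4]
  have b1 : (C0.image Prod.fst).min' hrC ≤ u.1 := Finset.min'_le _ _ (Finset.mem_image_of_mem _ hu)
  have b2 : u.1 ≤ (C0.image Prod.fst).max' hrC := Finset.le_max' _ _ (Finset.mem_image_of_mem _ hu)
  have b3 : (C0.image Prod.snd).min' hcC ≤ u.2 := Finset.min'_le _ _ (Finset.mem_image_of_mem _ hu)
  have b4 : u.2 ≤ (C0.image Prod.snd).max' hcC := Finset.le_max' _ _ (Finset.mem_image_of_mem _ hu)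
  have b5 : (C0.image Prod.fst).min' hrC ≤ v.1 := Finset.min'_le _ _ (Finset.mem_image_of_mem _ hv)
  have b6 : v.1 ≤ (C0.image Prod.fst).max' hrC := Finset.le_max' _ _ (Finset.mem_image_of_mem _ hv)
  have b7 : (C0.image Prod.snd).min' hcC ≤ v.2 := Finset.min'_le _ _ (Finset.mem_image_of_mem _ hv)
  have b8 : v.2 ≤ (C0.image Prod.snd).max' hcC := Finset.le_max' _ _ (Finset.mem_image_of_mem _ hv)
  unfold nadj at hau hav
  omega

lemma phi_insert_le (hw : w ∉ T) {u v : Pt} (hu : u ∈ T) (hv : v ∈ T) (huv : u ≠ v)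
    (hau : nadj w u) (hav : nadj w v) (hr : reach T u v) :
    phi (insert w T) ≤ phi T := by
  classical
  obtain ⟨AI, M, hM, hphiT, hphiT', hmem⟩ := phi_insert_decomp hw
  set C0 : Finset Pt := comp T u with hC0
  have hC0M : C0 ∈ M := hmem u hu hau
  have huC0 : u ∈ C0 := self_mem_comp hu
  have hvC0 : v ∈ C0 := mem_comp.2 ⟨hv, hr⟩
  have hsup : M.sup id = C0 ∪ (M.erase C0).sup id := by
    conv_lhs => rw [← Finset.insert_erase hC0M]
    rw [Finset.sup_insert]
    simp only [id_eq, Finset.sup_eq_union]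
  have hkey : phi1 (insert w (M.sup id)) ≤ ∑ C ∈ M, phi1 C := by
    rw [hsup, ← Finset.insert_union]
    calc phi1 (insert w C0 ∪ (M.erase C0).sup id)
        ≤ phi1 (insert w C0) + ∑ C ∈ M.erase C0, phi1 C :=
          phi1_blob w _ _ (Finset.mem_insert_self _ _)
            (fun C hC => hM C (Finset.mem_of_mem_erase hC))
      _ ≤ phi1 C0 + ∑ C ∈ M.erase C0, phi1 C := by
          have := phi1_insert_box huC0 hvC0 huv hau hav
          omega
      _ = ∑ C ∈ M, phi1 C := Finset.add_sum_erase _ _ hC0M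
  omega

lemma phi_le_card (T : Finset Pt) : phi T ≤ T.card := by
  classical
  induction T using Finset.induction_on with
  | empty => simp [phi]
  | @insert a T ha ih =>
    have := phi_insert_le_succ (T := T) (w := a) ha
    rw [Finset.card_insert_of_notMem ha]
    omega

end Decomp
/-! ### The grid -/

def grid (m n : ℕ) : Finset Pt := Finset.range m ×ˢ Finset.range n

lemma mem_grid {m n : ℕ} {p : Pt} : p ∈ grid m n ↔ p.1 < m ∧ p.2 < n := by
  simp [grid, Finset.mem_product]

lemma reach_grid_col {m n a : ℕ} (ha : a < m) : ∀ b, b < n → reach (grid m n) (a, b) (a, 0) := by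
  intro b
  induction b with
  | zero => intro _; exact Relation.ReflTransGen.refl
  | succ b ih =>
    intro hb
    refine Relation.ReflTransGen.head ⟨?_, ?_, ?_⟩ (ih (by omega))
    · exact mem_grid.2 ⟨ha, hb⟩
    · exact mem_grid.2 ⟨ha, by omega⟩
    · left; exact ⟨rfl, by omega⟩

lemma reach_grid_row {m n : ℕ} (hn : 0 < n) : ∀ a, a < m → reach (grid m n) (a, 0) (0, 0) := by
  intro a
  induction a with
  | zero => intro _; exact Relation.ReflTransGen.refl
  | succ a ih =>
    intro ha
    refine Relation.ReflTransGen.head ⟨?_, ?_, ?_⟩ (ih (by omega))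
    · exact mem_grid.2 ⟨ha, hn⟩
    · exact mem_grid.2 ⟨by omega, hn⟩
    · right; exact ⟨rfl, by omega⟩

lemma reach_grid {m n : ℕ} {p q : Pt} (hp : p ∈ grid m n) (hq : q ∈ grid m n) :
    reach (grid m n) p q := by
  obtain ⟨hp1, hp2⟩ := mem_grid.1 hp
  obtain ⟨hq1, hq2⟩ := mem_grid.1 hq
  have h1 : reach (grid m n) (p.1, p.2) (0, 0) :=
    (reach_grid_col hp1 p.2 hp2).trans (reach_grid_row (by omega) p.1 hp1)
  have h2 : reach (grid m n) (q.1, q.2) (0, 0) :=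
    (reach_grid_col hq1 q.2 hq2).trans (reach_grid_row (by omega) q.1 hq1)
  exact (show reach _ p (0,0) from h1).trans h2.symm

lemma span_range {m : ℕ} (hm : 1 ≤ m) : span (Finset.range m) = m := by
  have h : (Finset.range m).Nonempty := ⟨0, Finset.mem_range.2 (by omega)⟩
  rw [span_eq h]
  have h1 : (Finset.range m).max' h = m - 1 := by
    apply le_antisymm
    · exact Finset.max'_le _ _ _ (fun a ha => by simp only [Finset.mem_range] at ha; omega)
    · exact Finset.le_max' _ _ (Finset.mem_range.2 (by omega))
  have h2 : (Finset.range m).min' h = 0 := by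
    apply le_antisymm
    · exact Finset.min'_le _ _ (Finset.mem_range.2 (by omega))
    · omega
  omega

lemma phi_grid {m n : ℕ} (hm : 1 ≤ m) (hn : 1 ≤ n) : phi (grid m n) = m + n - 1 := by
  classical
  have h00 : ((0 : ℕ), (0 : ℕ)) ∈ grid m n := mem_grid.2 ⟨by omega, by omega⟩
  have hcomp : ∀ p ∈ grid m n, comp (grid m n) p = grid m n := by
    intro p hp
    ext q
    rw [mem_comp]
    exact ⟨fun h => h.1, fun h => ⟨h, reach_grid hp h⟩⟩
  have himg : (grid m n).image (comp (grid m n)) = {grid m n} := by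
    ext D
    simp only [Finset.mem_image, Finset.mem_singleton]
    constructor
    · rintro ⟨p, hp, rfl⟩; exact hcomp p hp
    · rintro rfl; exact ⟨(0,0), h00, hcomp _ h00⟩
  rw [phi, himg, Finset.sum_singleton]
  have hr : (grid m n).image Prod.fst = Finset.range m := by
    ext a
    simp only [Finset.mem_image, Finset.mem_range]
    constructor
    · rintro ⟨p, hp, rfl⟩; exact (mem_grid.1 hp).1
    · intro ha; exact ⟨(a, 0), mem_grid.2 ⟨ha, by omega⟩, rfl⟩
  have hc : (grid m n).image Prod.snd = Finset.range n := by
    ext b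
    simp only [Finset.mem_image, Finset.mem_range]
    constructor
    · rintro ⟨p, hp, rfl⟩; exact (mem_grid.1 hp).2
    · intro hb; exact ⟨(0, b), mem_grid.2 ⟨by omega, hb⟩, rfl⟩
  rw [phi1, hr, hc, span_range hm, span_range hn]

/-! ### Closure -/

def Closed (m n : ℕ) (T : Finset Pt) : Prop :=
  ∀ w ∈ grid m n, w ∉ T →
    ¬ ∃ u v : Pt, u ∈ T ∧ v ∈ T ∧ u ≠ v ∧ nadj w u ∧ nadj w v ∧ reach T u v

lemma exists_closed {m n : ℕ} : ∀ (k : ℕ) (T : Finset Pt), T ⊆ grid m n →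
    (grid m n).card - T.card ≤ k →
    ∃ T', T ⊆ T' ∧ T' ⊆ grid m n ∧ Closed m n T' ∧ phi T' ≤ phi T := by
  intro k
  induction k with
  | zero =>
    intro T hT hc
    have : T = grid m n := Finset.eq_of_subset_of_card_le hT
      (by have := Finset.card_le_card hT; omega)
    refine ⟨T, Finset.Subset.refl _, hT, ?_, le_refl _⟩
    intro w hw hwT
    exact absurd (this ▸ hw : w ∈ T) hwT
  | succ k ih =>
    intro T hT hc
    by_cases hcl : Closed m n T
    · exact ⟨T, Finset.Subset.refl _, hT, hcl, le_refl _⟩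
    · rw [Closed] at hcl
      push_neg at hcl
      obtain ⟨w, hwg, hwT, u, v, hu, hv, huv, hau, hav, hr⟩ := hcl
      have hsub : insert w T ⊆ grid m n := Finset.insert_subset hwg hT
      have hcard : (grid m n).card - (insert w T).card ≤ k := by
        rw [Finset.card_insert_of_notMem hwT]
        have h1 : T.card < (grid m n).card :=
          Finset.card_lt_card (Finset.ssubset_iff_of_subset hT |>.2 ⟨w, hwg, hwT⟩)
        omega
      obtain ⟨T', h1, h2, h3, h4⟩ := ih (insert w T) hsub hcard
      exact ⟨T', (Finset.subset_insert _ _).trans h1, h2, h3,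
        h4.trans (phi_insert_le hwT hu hv huv hau hav hr)⟩
/-! ### Bridge: extracting data from a cycle -/

section Bridge

open SimpleGraph

variable {V : Type*} {G : SimpleGraph V}

lemma walk_rtg {s : Set V} {S : Set V} : ∀ {a b : ↥s} (q : (G.induce s).Walk a b),
    (∀ x ∈ q.support, (x : V) ∈ S) →
    Relation.ReflTransGen (fun x y : V => x ∈ S ∧ y ∈ S ∧ G.Adj x y) a.val b.val := by
  intro a b q
  induction q with
  | nil => intro _; exact Relation.ReflTransGen.refl
  | @cons x y z h q ih =>
    intro hsup
    refine Relation.ReflTransGen.head ⟨?_, ?_, h⟩ (ih ?_)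
    · exact hsup x (by simp [SimpleGraph.Walk.support_cons])
    · exact hsup y (by simp [SimpleGraph.Walk.support_cons,
        SimpleGraph.Walk.start_mem_support])
    · intro x hx
      exact hsup x (by simp [SimpleGraph.Walk.support_cons, hx])

lemma cycle_extract {S : Set V} {w : V} (hw : w ∉ S)
    (c : (G.induce (insert w S)).Walk ⟨w, Set.mem_insert w S⟩ ⟨w, Set.mem_insert w S⟩)
    (hc : c.IsCycle) :
    ∃ u v : V, u ∈ S ∧ v ∈ S ∧ u ≠ v ∧ G.Adj w u ∧ G.Adj w v ∧
      Relation.ReflTransGen (fun x y : V => x ∈ S ∧ y ∈ S ∧ G.Adj x y) u v := by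
  revert hc
  cases c with
  | nil => intro hc; exact absurd rfl hc.ne_nil
  | @cons _ b _ h p =>
    intro hc
    obtain ⟨x, q, h', hceq⟩ := SimpleGraph.Walk.exists_cons_eq_concat h p
    cases q with
    | nil =>
      have h3 := hc.three_le_length
      rw [hceq] at h3
      simp at h3
    | @cons _ y _ h₂ q₂ =>
      rw [hceq, SimpleGraph.Walk.concat_cons] at hc
      have hnodupE := hc.isCircuit.isTrail.edges_nodup
      rw [SimpleGraph.Walk.edges_cons, SimpleGraph.Walk.edges_concat,
        List.concat_eq_append, List.nodup_cons] at hnodupE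
      have hnotinE := hnodupE.1
      have hnodupS := hc.support_nodup
      rw [SimpleGraph.Walk.support_cons, SimpleGraph.Walk.support_concat] at hnodupS
      have hnodupS' : (q₂.support ++ [(⟨w, Set.mem_insert w S⟩ : ↥(insert w S))]).Nodup := by
        simpa using hnodupS
      have hwq : (⟨w, Set.mem_insert w S⟩ : ↥(insert w S)) ∉ q₂.support := by
        rw [List.nodup_append] at hnodupS'
        intro hmem
        exact hnodupS'.2.2 _ hmem _ (List.mem_singleton_self _) rfl
      have hyx : y ≠ x := by
        rintro rfl
        apply hnotinE
        apply List.mem_append_right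
        rw [List.mem_singleton, Sym2.eq_swap]
      have hmemS : ∀ z ∈ q₂.support, (z : V) ∈ S := by
        intro z hz
        have hz' : (z : V) ∈ insert w S := z.2
        rcases hz' with hz' | hz'
        · exfalso
          apply hwq
          have hzz : z = (⟨w, Set.mem_insert w S⟩ : ↥(insert w S)) := Subtype.ext hz'
          exact hzz ▸ hz
        · exact hz'
      have hyS : (y : V) ∈ S := hmemS y q₂.start_mem_support
      have hxS : (x : V) ∈ S := hmemS x q₂.end_mem_support
      refine ⟨y, x, hyS, hxS, ?_, h₂, (h' : G.Adj (x : V) w).symm, walk_rtg q₂ hmemS⟩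
      intro hEq
      exact hyx (Subtype.ext hEq)

end Bridge
/-! ### Grid-specific glue -/

section Glue

open SimpleGraph

variable {m n : ℕ}

def emb : Fin m × Fin n → Pt := fun p => (p.1.1, p.2.1)

lemma emb_inj : Function.Injective (emb (m := m) (n := n)) := by
  intro p q h
  have h1 : p.1.1 = q.1.1 := congrArg Prod.fst h
  have h2 : p.2.1 = q.2.1 := congrArg Prod.snd h
  exact Prod.ext (Fin.ext h1) (Fin.ext h2)

lemma adj_iff {p q : Fin m × Fin n} :
    (pathGraph m □ pathGraph n).Adj p q ↔ nadj (emb p) (emb q) := by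
  rw [SimpleGraph.boxProd_adj]
  simp only [SimpleGraph.pathGraph_adj, Prod.ext_iff, Fin.ext_iff]
  unfold nadj emb
  dsimp only
  tauto

lemma emb_mem_grid (p : Fin m × Fin n) : emb p ∈ grid m n :=
  mem_grid.2 ⟨p.1.isLt, p.2.isLt⟩

lemma lower_bound (hm : 2 ≤ m) (hn : 2 ≤ n) (S : Set (Fin m × Fin n))
    (hhull : cycleHull (pathGraph m □ pathGraph n) S = Set.univ) :
    m + n - 1 ≤ S.ncard := by
  classical
  have hSfin : S.Finite := Set.toFinite S
  set F := hSfin.toFinset with hF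
  set T0 : Finset Pt := F.image emb with hT0
  have hT0g : T0 ⊆ grid m n := by
    intro q hq
    obtain ⟨p, _, rfl⟩ := Finset.mem_image.1 hq
    exact emb_mem_grid p
  obtain ⟨T', hTT', hT'g, hclosed, hphi⟩ :=
    exists_closed (m := m) (n := n) ((grid m n).card) T0 hT0g (Nat.sub_le _ _)
  set S' : Set (Fin m × Fin n) := {p | emb p ∈ T'} with hS'
  have hSS' : S ⊆ S' := fun p hp =>
    hTT' (Finset.mem_image_of_mem _ (hSfin.mem_toFinset.2 hp))
  have hconv : CycleConvex (pathGraph m □ pathGraph n) S' := by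
    intro w hw c hc
    obtain ⟨u, v, huS, hvS, huv, hau, hav, hrtg⟩ := cycle_extract hw c hc
    refine hclosed (emb w) (emb_mem_grid w) hw
      ⟨emb u, emb v, huS, hvS, ?_, adj_iff.1 hau, adj_iff.1 hav, ?_⟩
    · exact fun hEq => huv (emb_inj hEq)
    · exact Relation.ReflTransGen.lift emb
        (fun a b hab => ⟨hab.1, hab.2.1, adj_iff.1 hab.2.2⟩) _ _ hrtg
  have hS'univ : S' = Set.univ := by
    rw [cycleHull] at hhull
    exact Set.sInter_eq_univ.1 hhull S' ⟨hSS', hconv⟩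
  have hgT' : grid m n ⊆ T' := by
    intro q hq
    obtain ⟨h1, h2⟩ := mem_grid.1 hq
    have hmem : (⟨q.1, h1⟩, ⟨q.2, h2⟩) ∈ S' := hS'univ ▸ Set.mem_univ _
    simpa [hS', emb] using hmem
  have hT'eq : T' = grid m n := Finset.Subset.antisymm hT'g hgT'
  have h1 : phi (grid m n) = m + n - 1 := phi_grid (by omega) (by omega)
  have h2 : T0.card = S.ncard := by
    rw [hT0, Finset.card_image_of_injective _ emb_inj,
      Set.ncard_eq_toFinset_card S hSfin]
  have h3 := phi_le_card T0
  rw [hT'eq, h1] at hphi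
  omega

/-! ### The explicit hull set -/

def LF (m n : ℕ) : Finset (Fin m × Fin n) :=
  Finset.univ.filter (fun p => p.1.1 = 0 ∨ p.2.1 = 0)

lemma LF_card (hm : 2 ≤ m) (hn : 2 ≤ n) : (LF m n).card = m + n - 1 := by
  classical
  have hm0 : 0 < m := by omega
  have hn0 : 0 < n := by omega
  set A : Finset (Fin m × Fin n) := Finset.univ ×ˢ {(⟨0, hn0⟩ : Fin n)} with hA
  set B : Finset (Fin m × Fin n) := {(⟨0, hm0⟩ : Fin m)} ×ˢ Finset.univ with hB
  have hLF : LF m n = A ∪ B := by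
    ext p
    simp only [LF, Finset.mem_filter, Finset.mem_univ, true_and, Finset.mem_union,
      hA, hB, Finset.mem_product, Finset.mem_singleton, Fin.ext_iff]
    tauto
  have hAcard : A.card = m := by
    rw [hA, Finset.card_product]
    simp
  have hBcard : B.card = n := by
    rw [hB, Finset.card_product]
    simp
  have hABcard : (A ∩ B).card = 1 := by
    have : A ∩ B = {((⟨0, hm0⟩ : Fin m), (⟨0, hn0⟩ : Fin n))} := by
      ext p
      simp only [Finset.mem_inter, hA, hB, Finset.mem_product, Finset.mem_singleton,
        Finset.mem_univ, true_and, and_true, Prod.ext_iff]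
      tauto
    rw [this, Finset.card_singleton]
  have := Finset.card_union_add_card_inter A B
  rw [hLF]
  omega

lemma LF_hull (hm : 2 ≤ m) (hn : 2 ≤ n) :
    cycleHull (pathGraph m □ pathGraph n) (↑(LF m n)) = Set.univ := by
  classical
  rw [cycleHull, Set.sInter_eq_univ]
  rintro T ⟨hLT, hconv⟩
  rw [Set.eq_univ_iff_forall]
  suffices hmain : ∀ (k a b : ℕ) (ha : a < m) (hb : b < n), a + b ≤ k →
      ((⟨a, ha⟩ : Fin m), (⟨b, hb⟩ : Fin n)) ∈ T by
    rintro ⟨⟨a, ha⟩, ⟨b, hb⟩⟩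
    exact hmain (a + b) a b ha hb le_rfl
  intro k
  induction k with
  | zero =>
    intro a b ha hb hab
    have ha0 : a = 0 := by omega
    apply hLT
    simp only [Finset.coe_filter, LF, Set.mem_setOf_eq, Finset.mem_univ, true_and]
    exact Or.inl ha0
  | succ k ih =>
    intro a b ha hb hab
    by_cases ha0 : a = 0
    · apply hLT
      simp only [Finset.coe_filter, LF, Set.mem_setOf_eq, Finset.mem_univ, true_and]
      exact Or.inl ha0
    by_cases hb0 : b = 0
    · apply hLT
      simp only [Finset.coe_filter, LF, Set.mem_setOf_eq, Finset.mem_univ, true_and]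
      exact Or.inr hb0
    -- interior vertex
    have ha1 : a - 1 < m := by omega
    have hb1 : b - 1 < n := by omega
    set w : Fin m × Fin n := (⟨a, ha⟩, ⟨b, hb⟩) with hwdef
    set x1 : Fin m × Fin n := (⟨a - 1, ha1⟩, ⟨b, hb⟩) with hx1def
    set x2 : Fin m × Fin n := (⟨a - 1, ha1⟩, ⟨b - 1, hb1⟩) with hx2def
    set x3 : Fin m × Fin n := (⟨a, ha⟩, ⟨b - 1, hb1⟩) with hx3def
    have hx1 : x1 ∈ T := ih (a - 1) b ha1 hb (by omega)
    have hx2 : x2 ∈ T := ih (a - 1) (b - 1) ha1 hb1 (by omega)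
    have hx3 : x3 ∈ T := ih a (b - 1) ha hb1 (by omega)
    by_contra hw
    -- adjacencies
    have a1 : (pathGraph m □ pathGraph n).Adj w x1 := by
      rw [adj_iff, hwdef, hx1def]; unfold nadj emb; dsimp only; omega
    have a2 : (pathGraph m □ pathGraph n).Adj x1 x2 := by
      rw [adj_iff, hx1def, hx2def]; unfold nadj emb; dsimp only; omega
    have a3 : (pathGraph m □ pathGraph n).Adj x2 x3 := by
      rw [adj_iff, hx2def, hx3def]; unfold nadj emb; dsimp only; omega
    have a4 : (pathGraph m □ pathGraph n).Adj x3 w := by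
      rw [adj_iff, hx3def, hwdef]; unfold nadj emb; dsimp only; omega
    -- distinctness (on the underlying type)
    have d01 : w ≠ x1 := by
      rw [hwdef, hx1def]
      simp only [ne_eq, Prod.mk.injEq, Fin.mk.injEq, not_and]
      omega
    have d02 : w ≠ x2 := by
      rw [hwdef, hx2def]
      simp only [ne_eq, Prod.mk.injEq, Fin.mk.injEq, not_and]
      omega
    have d03 : w ≠ x3 := by
      rw [hwdef, hx3def]
      simp only [ne_eq, Prod.mk.injEq, Fin.mk.injEq, not_and]
      omega
    have d12 : x1 ≠ x2 := by
      rw [hx1def, hx2def]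
      simp only [ne_eq, Prod.mk.injEq, Fin.mk.injEq, not_and]
      omega
    have d13 : x1 ≠ x3 := by
      rw [hx1def, hx3def]
      simp only [ne_eq, Prod.mk.injEq, Fin.mk.injEq, not_and]
      omega
    have d23 : x2 ≠ x3 := by
      rw [hx2def, hx3def]
      simp only [ne_eq, Prod.mk.injEq, Fin.mk.injEq, not_and]
      omega
    -- the cycle in the induced graph
    set W : Set (Fin m × Fin n) := insert w ↑T with hWdef
    set w' : ↥W := ⟨w, Set.mem_insert _ _⟩ with hw'def
    set y1 : ↥W := ⟨x1, Set.mem_insert_of_mem _ hx1⟩ with hy1def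
    set y2 : ↥W := ⟨x2, Set.mem_insert_of_mem _ hx2⟩ with hy2def
    set y3 : ↥W := ⟨x3, Set.mem_insert_of_mem _ hx3⟩ with hy3def
    have e01 : w' ≠ y1 := fun h => d01 (congrArg Subtype.val h)
    have e02 : w' ≠ y2 := fun h => d02 (congrArg Subtype.val h)
    have e03 : w' ≠ y3 := fun h => d03 (congrArg Subtype.val h)
    have e12 : y1 ≠ y2 := fun h => d12 (congrArg Subtype.val h)
    have e13 : y1 ≠ y3 := fun h => d13 (congrArg Subtype.val h)
    have e23 : y2 ≠ y3 := fun h => d23 (congrArg Subtype.val h)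
    have h1 : ((pathGraph m □ pathGraph n).induce W).Adj w' y1 := a1
    have h2 : ((pathGraph m □ pathGraph n).induce W).Adj y1 y2 := a2
    have h3 : ((pathGraph m □ pathGraph n).induce W).Adj y2 y3 := a3
    have h4 : ((pathGraph m □ pathGraph n).induce W).Adj y3 w' := a4
    set c : ((pathGraph m □ pathGraph n).induce W).Walk w' w' :=
      SimpleGraph.Walk.cons h1 (SimpleGraph.Walk.cons h2
        (SimpleGraph.Walk.cons h3 (SimpleGraph.Walk.cons h4 SimpleGraph.Walk.nil)))
      with hcdef
    have hcyc : c.IsCycle := by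
      rw [SimpleGraph.Walk.isCycle_def]
      refine ⟨?_, ?_, ?_⟩
      · rw [SimpleGraph.Walk.isTrail_def, hcdef]
        simp only [SimpleGraph.Walk.edges_cons, SimpleGraph.Walk.edges_nil,
          List.nodup_cons, List.mem_cons, List.not_mem_nil, or_false,
          List.nodup_nil, and_true, Sym2.eq_iff]
        constructor
        · push_neg
          refine ⟨⟨?_, ?_⟩, ⟨?_, ?_⟩, ⟨?_, ?_⟩⟩ <;> intro hh <;> simp_all
        constructor
        · push_neg
          refine ⟨⟨?_, ?_⟩, ⟨?_, ?_⟩⟩ <;> intro hh <;> simp_all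
        constructor
        · push_neg
          refine ⟨?_, ?_⟩ <;> intro hh <;> simp_all
        simp
      · rw [hcdef]; simp
      · rw [hcdef]
        simp only [SimpleGraph.Walk.support_cons, SimpleGraph.Walk.support_nil,
          List.tail_cons, List.nodup_cons, List.mem_cons, List.not_mem_nil,
          or_false, List.nodup_nil, and_true, List.mem_singleton]
        push_neg
        exact ⟨⟨e12, e13, e01.symm⟩, ⟨e23, e02.symm⟩, e03.symm, trivial⟩
    exact hconv w hw c hcyc

end Glue

end CCGrid



theorem stmt_11 (m n : ℕ) (hm : 2 ≤ m) (hn : 2 ≤ n) :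
    cycleHullNumber (pathGraph m □ pathGraph n) = m + n - 1 := by
  have hupper : ∃ S : Set (Fin m × Fin n), S.ncard = m + n - 1 ∧
      cycleHull (pathGraph m □ pathGraph n) S = Set.univ := by
    refine ⟨↑(CCGrid.LF m n), ?_, CCGrid.LF_hull hm hn⟩
    rw [Set.ncard_coe_finset, CCGrid.LF_card hm hn]
  apply le_antisymm
  · obtain ⟨S, h1, h2⟩ := hupper
    exact Nat.sInf_le ⟨S, h1, h2⟩
  · refine le_csInf ?_ ?_
    · obtain ⟨S, h1, h2⟩ := hupper
      exact ⟨m + n - 1, S, h1, h2⟩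
    · rintro k ⟨S, hcard, hhull⟩
      exact hcard ▸ CCGrid.lower_bound hm hn S hhull
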